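/- Let H be a real inner product space, W ∈ H with ‖W‖ < 1, λ := 1 − ‖W‖². Define, for y ∈ H, α(y) := √(λ‖y‖² + ⟨W,y⟩²)/λ and β(y) := −⟨W,y⟩/λ. Then α is the norm associated to the inner product a(y,z) := (λ⟨y,z⟩ + ⟨W,y⟩⟨W,z⟩)/λ², the linear functional β satisfies ‖β‖_α² = ‖W‖² < 1 (i.e. sup over α(y) = 1 of β(y) equals ‖W‖), and the navigation solution F(y) = (√(λ‖y‖² + ⟨W,y⟩²) − ⟨W,y⟩)/λ equals α(y) + β(y). -/

import Mathlib

open scoped RealInnerProductSpace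

theorem navigation_solution_is_randers {H : Type*} [NormedAddCommGroup H]
    [InnerProductSpace ℝ H] [Nontrivial H] (W : H) (hW : ‖W‖ < 1) :
    let lam : ℝ := 1 - ‖W‖ ^ 2
    let α : H → ℝ := fun y => Real.sqrt (lam * ‖y‖ ^ 2 + ⟪W, y⟫ ^ 2) / lam
    let β : H → ℝ := fun y => -⟪W, y⟫ / lam
    let a : H → H → ℝ := fun y z => (lam * ⟪y, z⟫ + ⟪W, y⟫ * ⟪W, z⟫) / lam ^ 2
    -- `a` is a symmetric positive definite bilinear form and `α` its norm
    (∀ y z, a y z = a z y) ∧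
    (∀ (c : ℝ) (y y' z : H), a (c • y + y') z = c * a y z + a y' z) ∧
    (∀ y, y ≠ 0 → 0 < a y y) ∧
    (∀ y, α y = Real.sqrt (a y y)) ∧
    -- `β` is linear with `‖β‖_α = ‖W‖ < 1`
    (∀ (c : ℝ) (y y' : H), β (c • y + y') = c * β y + β y') ∧
    IsGreatest {r : ℝ | ∃ y, α y = 1 ∧ β y = r} ‖W‖ ∧
    -- the navigation solution equals `α + β`
    (∀ y, (Real.sqrt (lam * ‖y‖ ^ 2 + ⟪W, y⟫ ^ 2) - ⟪W, y⟫) / lam = α y + β y) := by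
  intro lam α β a
  have hW0 : (0:ℝ) ≤ ‖W‖ := norm_nonneg W
  have hlam : 0 < lam := by
    have : ‖W‖ ^ 2 < 1 := by nlinarith
    simp only [lam]; linarith
  have hnum : ∀ y : H, (0:ℝ) ≤ lam * ‖y‖ ^ 2 + ⟪W, y⟫ ^ 2 := by
    intro y
    have h1 : (0:ℝ) ≤ ‖y‖ ^ 2 := sq_nonneg _
    nlinarith [sq_nonneg (⟪W, y⟫ : ℝ)]
  refine ⟨?_, ?_, ?_, ?_, ?_, ⟨?_, ?_⟩, ?_⟩
  · intro y z
    simp only [a]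
    rw [real_inner_comm z y]
    ring
  · intro c y y' z
    simp only [a, inner_add_left, real_inner_smul_left, inner_add_right,
      real_inner_smul_right]
    ring
  · intro y hy
    have hy' : (0:ℝ) < ‖y‖ := norm_pos_iff.2 hy
    simp only [a, real_inner_self_eq_norm_sq]
    apply div_pos
    · nlinarith [mul_self_nonneg (⟪W, y⟫ : ℝ), mul_pos hlam (pow_pos hy' 2)]
    · positivity
  · intro y
    simp only [α, a, real_inner_self_eq_norm_sq]
    rw [← pow_two (⟪W, y⟫ : ℝ), Real.sqrt_div (hnum y), Real.sqrt_sq hlam.le]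
  · intro c y y'
    simp only [β, inner_add_right, real_inner_smul_right]
    ring
  · -- membership
    by_cases hw : W = 0
    · obtain ⟨x, hx⟩ := exists_ne (0 : H)
      refine ⟨‖x‖⁻¹ • x, ?_, ?_⟩
      · have hx' : (0:ℝ) < ‖x‖ := norm_pos_iff.2 hx
        simp only [α, lam, hw, inner_zero_left, norm_zero, norm_smul, norm_inv,
          norm_norm]
        rw [inv_mul_cancel₀ hx'.ne']
        norm_num
      · simp [β, hw]
    · have hw' : (0:ℝ) < ‖W‖ := norm_pos_iff.2 hw
      refine ⟨(-(lam / ‖W‖)) • W, ?_, ?_⟩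
      · have ht : ⟪W, (-(lam / ‖W‖)) • W⟫ = -(lam * ‖W‖) := by
          rw [real_inner_smul_right, real_inner_self_eq_norm_sq]
          field_simp
        simp only [α, ht, norm_smul, Real.norm_eq_abs]
        have habs : |(-(lam / ‖W‖))| = lam / ‖W‖ := by
          rw [abs_neg, abs_of_pos (div_pos hlam hw')]
        rw [habs]
        have hcalc : lam * (lam / ‖W‖ * ‖W‖) ^ 2 + (-(lam * ‖W‖)) ^ 2 = lam ^ 2 := by
          field_simp
          simp only [lam]
          ring
        rw [hcalc, Real.sqrt_sq hlam.le, div_self hlam.ne']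
      · have ht : ⟪W, (-(lam / ‖W‖)) • W⟫ = -(lam * ‖W‖) := by
          rw [real_inner_smul_right, real_inner_self_eq_norm_sq]
          field_simp
        simp only [β, ht, neg_neg]
        field_simp
  · -- upper bound
    rintro r ⟨y, hα, hβ⟩
    simp only [α] at hα
    simp only [β] at hβ
    have hs : Real.sqrt (lam * ‖y‖ ^ 2 + ⟪W, y⟫ ^ 2) = lam := by
      field_simp at hα; linarith [hα]
    have heq : lam * ‖y‖ ^ 2 + ⟪W, y⟫ ^ 2 = lam ^ 2 := by
      have := Real.sq_sqrt (hnum y)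
      rw [hs] at this
      linarith
    have hCS : (⟪W, y⟫ : ℝ) ^ 2 ≤ ‖W‖ ^ 2 * ‖y‖ ^ 2 := by
      have h := abs_real_inner_le_norm W y
      have h2 : (⟪W, y⟫ : ℝ) ^ 2 = |(⟪W, y⟫ : ℝ)| ^ 2 := (sq_abs _).symm
      nlinarith [abs_nonneg (⟪W, y⟫ : ℝ)]
    have hl : lam = 1 - ‖W‖ ^ 2 := rfl
    have hsq : (⟪W, y⟫ : ℝ) ^ 2 ≤ ‖W‖ ^ 2 * lam ^ 2 := by
      nlinarith [mul_le_mul_of_nonneg_left hCS hlam.le]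
    have : -⟪W, y⟫ ≤ ‖W‖ * lam := by nlinarith [mul_nonneg hW0 hlam.le]
    rw [← hβ, div_le_iff₀ hlam]
    linarith
  · intro y
    simp only [α, β]
    ring
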